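/- arXiv:1604.04936 — 2 statements merged into one kernel-verified Lean document; each statement's English description precedes it below -/
import Mathlib

section
/- Let β ∈ [0,1), λ = 1−β, let n satisfy Assumption 1, and fix real numbers 0 < ε ≤ x. For t > 0 set N_t(y) = ∫_0^t n(t−τ)·(1−β S_τ^{−1})·S_τ^{−⌊y e^{λt}⌋} dτ, and set m(y) = ∫_y^∞ n(λ^{−1} log(s/y))·e^{−λs}·s^{−1} ds. Then lim_{t→∞} N_t(x)/N_t(ε) = m(x)/m(ε); i.e. conditioned on the rescaled clone size Y_t e^{−λt} exceeding ε, the rescaled clone size converges in distribution to the law with tail m(x)/m(ε) on [ε,∞), the normalized mean measure of the limiting Poisson point process of clone sizes. -/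
open Filter Real intervalIntegral MeasureTheory

/-- Assumption 1 on the wild-type growth function `n`. -/
def Assumption1 (n : ℝ → ℝ) : Prop :=
  (∀ τ : ℝ, τ < 0 → n τ = 0) ∧
  ContinuousOn n (Set.Ioi 0) ∧
  Filter.Tendsto n (nhdsWithin 0 (Set.Ioi 0)) (nhds (n 0)) ∧
  (∀ τ : ℝ, 0 < τ → 0 < n τ) ∧
  MonotoneOn n (Set.Ioi 0) ∧
  (∀ x : ℝ, 0 ≤ x → ∃ L : ℝ, 0 < L ∧
    Filter.Tendsto (fun t : ℝ => n (t - x) / n t) Filter.atTop (nhds L))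

/-- `S u = (1 - β e^{-λu})/(1 - e^{-λu})` with `λ = 1 - β`. -/
noncomputable def birthDeathS (β u : ℝ) : ℝ :=
  (1 - β * Real.exp (-(1 - β) * u)) / (1 - Real.exp (-(1 - β) * u))

open Set

lemma n_pos {n : ℝ → ℝ} (hn : Assumption1 n) : ∀ τ : ℝ, 0 < τ → 0 < n τ := hn.2.2.2.1

lemma n_lim {n : ℝ → ℝ} (hn : Assumption1 n) : ∀ x : ℝ, 0 ≤ x → ∃ L : ℝ, 0 < L ∧
    Filter.Tendsto (fun t : ℝ => n (t - x) / n t) Filter.atTop (nhds L) := hn.2.2.2.2.2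

lemma invS (β τ : ℝ) : (birthDeathS β τ)⁻¹
    = (1 - Real.exp (-(1 - β) * τ)) / (1 - β * Real.exp (-(1 - β) * τ)) := by
  rw [birthDeathS, inv_div]

section nfacts
variable {n : ℝ → ℝ}

lemma n_zero_le (hn : Assumption1 n) {τ : ℝ} (hτ : 0 < τ) : n 0 ≤ n τ := by
  obtain ⟨h0, hc, hr, hpos, hmono, hlim⟩ := hn
  refine le_of_tendsto hr ?_
  filter_upwards [Ioo_mem_nhdsGT_of_mem (Set.left_mem_Ico.2 hτ)] with z hz
  exact hmono hz.1 hτ hz.2.le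

lemma n_le_n (hn : Assumption1 n) {u v : ℝ} (hu : 0 ≤ u) (huv : u ≤ v) : n u ≤ n v := by
  rcases eq_or_lt_of_le hu with h|h
  · rcases eq_or_lt_of_le huv with h2|h2
    · rw [h2]
    · exact (h ▸ n_zero_le hn (h ▸ h2))
  · exact hn.2.2.2.2.1 h (lt_of_lt_of_le h huv) huv

lemma n_nonneg (hn : Assumption1 n) (u : ℝ) : 0 ≤ n u := by
  rcases lt_trichotomy u 0 with h|h|h
  · exact (hn.1 u h).ge
  · subst h
    refine ge_of_tendsto hn.2.2.1 ?_
    filter_upwards [self_mem_nhdsWithin] with z hz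
    exact (hn.2.2.2.1 z hz).le
  · exact (hn.2.2.2.1 u h).le

lemma n_contOn_Ici (hn : Assumption1 n) : ContinuousOn n (Set.Ici 0) := by
  intro x hx
  rcases eq_or_lt_of_le (Set.mem_Ici.mp hx) with h|h
  · subst h
    have hs : Set.Ici (0:ℝ) = {0} ∪ Set.Ioi 0 := by
      ext z; simp [le_iff_lt_or_eq, or_comm, eq_comm]
    rw [ContinuousWithinAt, hs, nhdsWithin_union]
    exact Tendsto.sup (by rw [nhdsWithin_singleton]; exact tendsto_pure_nhds n 0) hn.2.2.1
  · exact (hn.2.1.continuousAt (Ioi_mem_nhds h)).continuousWithinAt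

end nfacts

lemma pow_le_factorial_mul_exp (M : ℕ) {x : ℝ} (hx : 0 ≤ x) :
    x ^ M ≤ M.factorial * Real.exp x := by
  have h := Real.sum_le_exp_of_nonneg hx (M + 1)
  have h2 : x ^ M / M.factorial ≤ ∑ i ∈ Finset.range (M+1), x ^ i / i.factorial := by
    refine Finset.single_le_sum (f := fun i => x ^ i / (i.factorial : ℝ)) ?_ (Finset.self_mem_range_succ M)
    intro i _
    positivity
  have h3 : x ^ M / M.factorial ≤ Real.exp x := le_trans h2 h
  have hM : (0:ℝ) < M.factorial := by exact_mod_cast M.factorial_pos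
  calc x ^ M = M.factorial * (x ^ M / M.factorial) := by field_simp
  _ ≤ M.factorial * Real.exp x := by
      exact mul_le_mul_of_nonneg_left h3 hM.le

lemma n_growth {n : ℝ → ℝ} (hn : Assumption1 n) :
    ∃ C p : ℝ, 0 < C ∧ 0 ≤ p ∧ ∀ u : ℝ, 0 ≤ u → n u ≤ C * Real.exp (p * u) := by
  obtain ⟨L, hL, hLt⟩ := n_lim hn 1 zero_le_one
  -- eventually ratio ≥ L/2
  have hev : ∀ᶠ t in atTop, L / 2 ≤ n (t - 1) / n t := by
    refine hLt.eventually (eventually_ge_nhds (by linarith))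
  obtain ⟨T0, hT0⟩ := hev.exists_forall_of_atTop
  set T : ℝ := max T0 1 with hT
  have hT1 : (1:ℝ) ≤ T := le_max_right _ _
  have hTpos : (0:ℝ) < T := lt_of_lt_of_le one_pos hT1
  have hnT : 0 < n T := n_pos hn T hTpos
  set M : ℝ := 2 / L with hM
  have hM1 : (0:ℝ) < M := by positivity
  have hstep : ∀ u : ℝ, T ≤ u → n u ≤ M * n (u - 1) := by
    intro u hu
    have h1 : L / 2 ≤ n (u - 1) / n u := hT0 u (le_trans (le_max_left _ _) hu)
    have h2 : 0 < n u := n_pos hn u (lt_of_lt_of_le hTpos hu)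
    have h3 : L / 2 * n u ≤ n (u - 1) := by
      exact (le_div_iff₀ h2).mp h1
    rw [hM, div_mul_eq_mul_div, le_div_iff₀ hL]
    nlinarith
  have hM1' : (1:ℝ) ≤ M := by
    -- L ≤ 1 since n monotone
    have : L ≤ 1 := by
      refine le_of_tendsto hLt ?_
      filter_upwards [eventually_ge_atTop (2:ℝ)] with t ht
      have h2 : 0 < n t := n_pos hn t (by linarith)
      rw [div_le_one h2]
      exact n_le_n hn (by linarith) (by linarith)
    rw [hM, le_div_iff₀ hL]; linarith
  have key : ∀ k : ℕ, ∀ u : ℝ, 0 ≤ u → u ≤ T + k → n u ≤ M ^ k * n T := by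
    intro k
    induction k with
    | zero =>
      intro u hu huT
      simpa using n_le_n hn hu (by simpa using huT)
    | succ k ih =>
      intro u hu huT
      by_cases hc : u ≤ T + k
      · refine le_trans (ih u hu hc) ?_
        have : M ^ k ≤ M ^ (k+1) := pow_le_pow_right₀ hM1' (Nat.le_succ k)
        exact mul_le_mul_of_nonneg_right this hnT.le
      · push_neg at hc
        have hTu : T ≤ u := by
          have : (0:ℝ) ≤ (k:ℝ) := Nat.cast_nonneg k
          linarith
        have h1 : n u ≤ M * n (u - 1) := hstep u hTu
        have h2 : n (u - 1) ≤ M ^ k * n T := by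
          refine ih (u - 1) ?_ ?_
          · have : (0:ℝ) ≤ (k:ℝ) := Nat.cast_nonneg k
            linarith
          · push_cast at huT ⊢; linarith
        calc n u ≤ M * n (u-1) := h1
        _ ≤ M * (M ^ k * n T) := mul_le_mul_of_nonneg_left h2 hM1.le
        _ = M ^ (k+1) * n T := by ring
  refine ⟨M * n T, Real.log M, by positivity, Real.log_nonneg hM1', ?_⟩
  intro u hu
  have h1 : n u ≤ M ^ (⌈u⌉₊) * n T := by
    refine key ⌈u⌉₊ u hu ?_
    have := Nat.le_ceil u
    linarith
  have h2 : (M:ℝ) ^ (⌈u⌉₊) ≤ Real.exp (Real.log M * (u + 1)) := by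
    have : (M:ℝ) ^ (⌈u⌉₊) = Real.exp (Real.log M * ⌈u⌉₊) := by
      rw [mul_comm, Real.exp_nat_mul, Real.exp_log hM1]
    rw [this]
    refine Real.exp_le_exp.2 ?_
    have hceil : (⌈u⌉₊ : ℝ) ≤ u + 1 := by
      have := Nat.ceil_lt_add_one hu
      linarith
    exact mul_le_mul_of_nonneg_left hceil (Real.log_nonneg hM1')
  calc n u ≤ M ^ (⌈u⌉₊) * n T := h1
  _ ≤ Real.exp (Real.log M * (u+1)) * n T := mul_le_mul_of_nonneg_right h2 hnT.le
  _ = M * n T * Real.exp (Real.log M * u) := by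
      rw [mul_add, Real.exp_add, mul_one, Real.exp_log hM1]; ring

lemma cov (β : ℝ) (hβ0 : 0 ≤ β) (hβ1 : β < 1) (lam : ℝ) (hlam : lam = 1 - β)
    (n : ℝ → ℝ) (hcont : ContinuousOn n (Set.Ici 0))
    (y : ℝ) (hy : 0 < y) (t : ℝ) (ht : 0 < t) (k : ℕ) :
    (∫ τ in (0:ℝ)..t, n (t - τ) * (1 - β * (birthDeathS β τ)⁻¹) * ((birthDeathS β τ)⁻¹) ^ k)
    = ∫ s in y..(y * Real.exp (lam * t)),
        n (lam⁻¹ * Real.log (s / y)) *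
          ((1 - β * ((1 - s * Real.exp (-(lam * t)) / y) / (1 - β * (s * Real.exp (-(lam * t)) / y))))
            * ((1 - s * Real.exp (-(lam * t)) / y) / (1 - β * (s * Real.exp (-(lam * t)) / y))) ^ k)
          / (lam * s) := by
  have hlam0 : 0 < lam := by rw [hlam]; linarith
  set Y : ℝ := y * Real.exp (lam * t) with hY
  set G : ℝ → ℝ := fun s =>
    n (lam⁻¹ * Real.log (s / y)) *
      ((1 - β * ((1 - s * Real.exp (-(lam * t)) / y) / (1 - β * (s * Real.exp (-(lam * t)) / y))))
        * ((1 - s * Real.exp (-(lam * t)) / y) / (1 - β * (s * Real.exp (-(lam * t)) / y))) ^ k)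
      / (lam * s) with hG
  set φ : ℝ → ℝ := fun τ => y * Real.exp (lam * (t - τ)) with hφ
  set φ' : ℝ → ℝ := fun τ => -(lam * (y * Real.exp (lam * (t - τ)))) with hφ'
  have hder : ∀ τ ∈ uIcc (0:ℝ) t, HasDerivAt φ (φ' τ) τ := by
    intro τ _
    have h1 : HasDerivAt (fun x : ℝ => lam * (t - x)) (lam * (-1)) τ :=
      ((hasDerivAt_id τ).const_sub t).const_mul lam
    have h2 := (h1.exp).const_mul y
    convert h2 using 1
    show -(lam * (y * Real.exp (lam * (t - τ)))) = _; ring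
    all_goals rfl
  have hφcont : ContinuousOn φ' (uIcc 0 t) := by fun_prop
  -- image of φ is inside Icc y Y
  have himg : φ '' uIcc 0 t ⊆ Icc y Y := by
    rintro s ⟨τ, hτ, rfl⟩
    rw [uIcc_of_le ht.le] at hτ
    constructor
    · have h1 : (1:ℝ) ≤ Real.exp (lam * (t - τ)) := by
        rw [Real.one_le_exp_iff]
        nlinarith [hτ.2]
      show y ≤ y * Real.exp (lam * (t - τ))
      nlinarith
    · have h1 : Real.exp (lam * (t - τ)) ≤ Real.exp (lam * t) := by
        rw [Real.exp_le_exp]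
        nlinarith [hτ.1]
      show y * Real.exp (lam * (t - τ)) ≤ Y
      rw [hY]
      nlinarith
  -- continuity of G on Icc y Y
  have hρ : ∀ s ∈ Icc y Y, s * Real.exp (-(lam * t)) / y ≤ 1 := by
    intro s hs
    rw [div_le_one hy]
    have := hs.2
    rw [hY] at this
    calc s * Real.exp (-(lam*t)) ≤ y * Real.exp (lam*t) * Real.exp (-(lam*t)) := by
          nlinarith [Real.exp_pos (-(lam*t))]
    _ = y := by rw [mul_assoc, ← Real.exp_add]; simp
  have hdenom : ∀ s ∈ Icc y Y, 1 - β * (s * Real.exp (-(lam * t)) / y) ≠ 0 := by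
    intro s hs
    have h1 : s * Real.exp (-(lam * t)) / y ≤ 1 := hρ s hs
    have hs0 : 0 < s := lt_of_lt_of_le hy hs.1
    have h2 : 0 ≤ s * Real.exp (-(lam * t)) / y := by positivity
    nlinarith
  have hGcont : ContinuousOn G (Icc y Y) := by
    have hT : ContinuousOn (fun s : ℝ =>
        (1 - s * Real.exp (-(lam * t)) / y) / (1 - β * (s * Real.exp (-(lam * t)) / y)))
        (Icc y Y) := ContinuousOn.div (by fun_prop) (by fun_prop) hdenom
    have hlog : ContinuousOn (fun s : ℝ => lam⁻¹ * Real.log (s / y)) (Icc y Y) := by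
      refine continuousOn_const.mul (ContinuousOn.log (continuousOn_id.div_const y) ?_)
      intro s hs
      have hs0 : 0 < s := lt_of_lt_of_le hy hs.1
      positivity
    have hmaps : MapsTo (fun s : ℝ => lam⁻¹ * Real.log (s / y)) (Icc y Y) (Ici 0) := by
      intro s hs
      have h1 : (1:ℝ) ≤ s / y := (one_le_div hy).2 hs.1
      have h2 : 0 ≤ Real.log (s / y) := Real.log_nonneg h1
      have : 0 ≤ lam⁻¹ * Real.log (s / y) := by positivity
      exact this
    have hn : ContinuousOn (fun s : ℝ => n (lam⁻¹ * Real.log (s / y))) (Icc y Y) :=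
      hcont.comp hlog hmaps
    refine ContinuousOn.div (hn.mul ((continuousOn_const.sub (continuousOn_const.mul hT)).mul (hT.pow k))) (by fun_prop) ?_
    intro s hs
    have hs0 : 0 < s := lt_of_lt_of_le hy hs.1
    positivity
  have hcov := integral_comp_smul_deriv' (a := 0) (b := t) hder hφcont (hGcont.mono himg)
  -- pointwise: orig integrand = -(φ' τ • G (φ τ))
  have hpt : ∀ τ : ℝ, n (t - τ) * (1 - β * (birthDeathS β τ)⁻¹) * ((birthDeathS β τ)⁻¹) ^ k
      = -(φ' τ • (G ∘ φ) τ) := by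
    intro τ
    have hy' : y ≠ 0 := ne_of_gt hy
    have hE : (0:ℝ) < Real.exp (lam * (t - τ)) := Real.exp_pos _
    have hA : lam * (y * Real.exp (lam * (t - τ))) ≠ 0 := by positivity
    have hsy : (y * Real.exp (lam * (t - τ))) / y = Real.exp (lam * (t - τ)) := by
      field_simp
    have hlog2 : lam⁻¹ * Real.log ((y * Real.exp (lam * (t - τ))) / y) = t - τ := by
      rw [hsy, Real.log_exp, inv_mul_cancel_left₀ (ne_of_gt hlam0)]
    have hrho : (y * Real.exp (lam * (t - τ))) * Real.exp (-(lam * t)) / y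
        = Real.exp (-(lam * τ)) := by
      have hee : Real.exp (lam * (t - τ)) * Real.exp (-(lam * t)) = Real.exp (-(lam * τ)) := by
        rw [← Real.exp_add]; ring_nf
      calc (y * Real.exp (lam * (t - τ))) * Real.exp (-(lam * t)) / y
          = Real.exp (lam * (t - τ)) * Real.exp (-(lam * t)) * (y / y) := by ring
      _ = Real.exp (-(lam * τ)) := by rw [div_self hy', mul_one, hee]
    have hS : (birthDeathS β τ)⁻¹
        = (1 - Real.exp (-(lam * τ))) / (1 - β * Real.exp (-(lam * τ))) := by
      rw [invS, hlam]
      ring_nf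
    simp only [Function.comp_apply, smul_eq_mul, φ, φ', G]
    rw [hlog2, hrho, ← hS, neg_mul, neg_neg]
    rw [mul_comm (lam * (y * Real.exp (lam * (t - τ))))]
    rw [div_mul_cancel₀ _ hA]
    ring
  calc (∫ τ in (0:ℝ)..t, n (t - τ) * (1 - β * (birthDeathS β τ)⁻¹) * ((birthDeathS β τ)⁻¹) ^ k)
      = ∫ τ in (0:ℝ)..t, -(φ' τ • (G ∘ φ) τ) :=
        intervalIntegral.integral_congr (fun τ _ => hpt τ)
  _ = -∫ τ in (0:ℝ)..t, φ' τ • (G ∘ φ) τ := intervalIntegral.integral_neg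
  _ = -∫ s in (φ 0)..(φ t), G s := by rw [hcov]
  _ = ∫ s in y..Y, G s := by
      have h1 : φ t = y := by simp [φ]
      have h2 : φ 0 = Y := by simp [φ, hY]
      rw [h1, h2, intervalIntegral.integral_symm y Y, neg_neg]

set_option maxHeartbeats 1000000 in
lemma tendsto_N (β : ℝ) (hβ0 : 0 ≤ β) (hβ1 : β < 1) (lam : ℝ) (hlam : lam = 1 - β)
    (n : ℝ → ℝ) (hn : Assumption1 n) (y : ℝ) (hy : 0 < y) :
    Tendsto (fun t : ℝ => ∫ τ in (0:ℝ)..t,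
        n (t - τ) * (1 - β * (birthDeathS β τ)⁻¹) *
          ((birthDeathS β τ)⁻¹) ^ (⌊y * Real.exp (lam * t)⌋₊)) atTop
      (nhds (∫ s in Set.Ioi y, n (lam⁻¹ * Real.log (s / y)) * Real.exp (-lam * s) / s)) := by
  have hlam0 : 0 < lam := by rw [hlam]; linarith
  obtain ⟨C, p, hC, hp, hCp⟩ := n_growth hn
  set M : ℕ := ⌈p / lam⌉₊ with hM
  -- notation
  set Y : ℝ → ℝ := fun t => y * Real.exp (lam * t) with hYdef
  set g : ℝ → ℝ → ℝ := fun t s =>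
    n (lam⁻¹ * Real.log (s / y)) *
      ((1 - β * ((1 - s * Real.exp (-(lam * t)) / y) / (1 - β * (s * Real.exp (-(lam * t)) / y))))
        * ((1 - s * Real.exp (-(lam * t)) / y) / (1 - β * (s * Real.exp (-(lam * t)) / y)))
          ^ (⌊y * Real.exp (lam * t)⌋₊))
      / (lam * s) with hgdef
  set F : ℝ → ℝ → ℝ := fun t s => (Set.Ioc y (Y t)).indicator (g t) s with hFdef
  set f : ℝ → ℝ := fun s => n (lam⁻¹ * Real.log (s / y)) * Real.exp (-lam * s) / s with hfdef
  set Kc : ℝ := C * M.factorial / ((lam / 4 * y) ^ M) / (lam * y) with hKc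
  have hKc0 : 0 < Kc := by positivity
  have hYtend : Tendsto Y atTop atTop := by
    apply Tendsto.const_mul_atTop hy
    exact Real.tendsto_exp_atTop.comp (tendsto_id.const_mul_atTop hlam0)
  -- basic bound facts about T on (0,1]
  have hTfacts : ∀ r : ℝ, 0 < r → r ≤ 1 →
      0 ≤ (1 - r) / (1 - β * r) ∧ (1 - r) / (1 - β * r) ≤ Real.exp (-(lam * r)) := by
    intro r hr0 hr1
    have hd : 0 < 1 - β * r := by nlinarith
    constructor
    · apply div_nonneg (by linarith) hd.le
    · have h1 : (1 - r) / (1 - β * r) ≤ 1 - lam * r := by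
        rw [div_le_iff₀ hd, hlam]
        have h0 : 0 ≤ (1 - β) * β * (r * r) := by
          have : (0:ℝ) ≤ 1 - β := by linarith
          positivity
        nlinarith [h0]
      have h2 : 1 - lam * r ≤ Real.exp (-(lam * r)) := by
        have := Real.add_one_le_exp (-(lam * r)); linarith
      linarith
  -- measurability
  have hnmIoi : ∀ z : ℝ, 0 < z → AEStronglyMeasurable (fun s : ℝ => n (lam⁻¹ * Real.log (s / z)))
      (volume.restrict (Ioi z)) := by
    intro z hz
    have hlogc : ContinuousOn (fun s : ℝ => lam⁻¹ * Real.log (s / z)) (Ioi z) := by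
      refine continuousOn_const.mul (ContinuousOn.log (continuousOn_id.div_const z) ?_)
      intro s hs
      have hs0 : 0 < s := lt_trans hz hs
      positivity
    have hmaps : MapsTo (fun s : ℝ => lam⁻¹ * Real.log (s / z)) (Ioi z) (Ici 0) := by
      intro s hs
      have h1 : (1:ℝ) ≤ s / z := (one_le_div hz).2 (le_of_lt hs)
      have h2 : 0 ≤ Real.log (s / z) := Real.log_nonneg h1
      have : 0 ≤ lam⁻¹ * Real.log (s / z) := by positivity
      exact this
    exact (((n_contOn_Ici hn).comp hlogc hmaps).aestronglyMeasurable measurableSet_Ioi)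
  have hgm : ∀ t : ℝ, AEStronglyMeasurable (F t) (volume.restrict (Ioi y)) := by
    intro t
    have hrest : Measurable (fun s : ℝ =>
        ((1 - β * ((1 - s * Real.exp (-(lam * t)) / y) / (1 - β * (s * Real.exp (-(lam * t)) / y))))
          * ((1 - s * Real.exp (-(lam * t)) / y) / (1 - β * (s * Real.exp (-(lam * t)) / y)))
            ^ (⌊y * Real.exp (lam * t)⌋₊))) := by
      have hlin : Measurable (fun s : ℝ => s * Real.exp (-(lam * t)) / y) :=
        (measurable_id.mul_const _).div_const _
      have hb : Measurable (fun s : ℝ => (1 - s * Real.exp (-(lam * t)) / y)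
          / (1 - β * (s * Real.exp (-(lam * t)) / y))) :=
        (measurable_const.sub hlin).div (measurable_const.sub (hlin.const_mul β))
      exact (measurable_const.sub (hb.const_mul β)).mul (hb.pow_const _)
    have hden : Measurable (fun s : ℝ => lam * s) := measurable_id.const_mul _
    have h1 : AEStronglyMeasurable (g t) (volume.restrict (Ioi y)) := by
      simp only [hgdef]
      exact (((hnmIoi y hy).aemeasurable.mul hrest.aemeasurable).div
        hden.aemeasurable).aestronglyMeasurable
    exact h1.indicator measurableSet_Ioc
  -- domination
  have hbound : ∀ᶠ t in atTop, ∀ᵐ s ∂(volume.restrict (Ioi y)),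
      ‖F t s‖ ≤ Kc * Real.exp (-(lam / 4) * s) := by
    filter_upwards [hYtend.eventually_ge_atTop 2] with t hY2
    rw [ae_restrict_iff' measurableSet_Ioi]
    refine ae_of_all _ ?_
    intro s hs
    by_cases hmem : s ∈ Ioc y (Y t)
    · have hs0 : 0 < s := lt_trans hy hs
      have hsy1 : (1:ℝ) ≤ s / y := (one_le_div hy).2 (le_of_lt hs)
      set E : ℝ := Real.exp (-(lam * t)) with hE
      have hE0 : 0 < E := Real.exp_pos _
      set r : ℝ := s * E / y with hr
      have hr0 : 0 < r := by positivity
      have hYE : Y t * E = y := by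
        rw [hYdef, hE]
        simp only
        rw [mul_assoc, ← Real.exp_add]
        simp
      have hrY : Y t * r = s := by
        rw [hr]
        field_simp
        nlinarith [hYE]
      have hr1 : r ≤ 1 := by
        have h1 : s * E ≤ Y t * E := by nlinarith [hmem.2]
        rw [hr, div_le_one hy]
        nlinarith
      obtain ⟨hT0, hTe⟩ := hTfacts r hr0 hr1
      set T : ℝ := (1 - r) / (1 - β * r) with hT
      have hT1 : T ≤ 1 := by
        refine le_trans hTe ?_
        rw [show (1:ℝ) = Real.exp 0 by simp]
        refine Real.exp_le_exp.2 (by nlinarith)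
      set k : ℕ := ⌊y * Real.exp (lam * t)⌋₊ with hk
      have hkY : Y t - 1 < (k : ℝ) := by
        rw [hk, hYdef]
        exact Nat.sub_one_lt_floor _
      have hkr : s / 2 ≤ (k : ℝ) * r := by
        have h1 : Y t / 2 ≤ (k:ℝ) := by linarith
        have h2 : (Y t / 2) * r ≤ (k:ℝ) * r := by nlinarith
        nlinarith
      have hTk : T ^ k ≤ Real.exp (-(lam * (s / 2))) := by
        calc T ^ k ≤ (Real.exp (-(lam * r))) ^ k := pow_le_pow_left₀ hT0 hTe k
        _ = Real.exp ((k : ℝ) * (-(lam * r))) := by rw [← Real.exp_nat_mul]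
        _ ≤ Real.exp (-(lam * (s / 2))) := by
            refine Real.exp_le_exp.2 ?_
            have := hkr
            nlinarith
      have hnb : n (lam⁻¹ * Real.log (s / y)) ≤ C * (s / y) ^ M := by
        have hu0 : 0 ≤ lam⁻¹ * Real.log (s / y) := by
          have := Real.log_nonneg hsy1; positivity
        refine le_trans (hCp _ hu0) ?_
        have h1 : p * (lam⁻¹ * Real.log (s / y)) ≤ (M : ℝ) * Real.log (s / y) := by
          have h2 : p / lam ≤ (M : ℝ) := Nat.le_ceil _
          have h3 : 0 ≤ Real.log (s / y) := Real.log_nonneg hsy1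
          calc p * (lam⁻¹ * Real.log (s / y)) = (p / lam) * Real.log (s / y) := by ring
          _ ≤ (M : ℝ) * Real.log (s / y) := mul_le_mul_of_nonneg_right h2 h3
        calc C * Real.exp (p * (lam⁻¹ * Real.log (s / y)))
            ≤ C * Real.exp ((M : ℝ) * Real.log (s / y)) := by
              exact mul_le_mul_of_nonneg_left (Real.exp_le_exp.2 h1) hC.le
        _ = C * (s / y) ^ M := by
              rw [Real.exp_nat_mul, Real.exp_log (by positivity)]
      have hpw : (s / y) ^ M ≤ (M.factorial : ℝ) * Real.exp (lam / 4 * s) / (lam / 4 * y) ^ M := by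
        have h1 : (lam / 4 * s) ^ M ≤ (M.factorial : ℝ) * Real.exp (lam / 4 * s) :=
          pow_le_factorial_mul_exp M (by positivity)
        have h2 : (s / y) ^ M = (lam / 4 * s) ^ M / (lam / 4 * y) ^ M := by
          rw [← div_pow]
          congr 1
          rw [mul_div_mul_left _ _ (by positivity : (lam / 4 : ℝ) ≠ 0)]
        rw [h2]
        gcongr
      -- assemble
      have hFg : F t s = g t s := by
        rw [hFdef]; exact indicator_of_mem hmem (g t)
      have hgnn : 0 ≤ g t s := by
        rw [hgdef]
        refine div_nonneg (mul_nonneg (n_nonneg hn _) (mul_nonneg ?_ (pow_nonneg hT0 _))) (by positivity)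
        nlinarith
      have hβT : 0 ≤ 1 - β * T ∧ 1 - β * T ≤ 1 := by
        constructor <;> nlinarith
      calc ‖F t s‖ = g t s := by rw [hFg, Real.norm_eq_abs, abs_of_nonneg hgnn]
      _ = n (lam⁻¹ * Real.log (s / y)) * ((1 - β * T) * T ^ k) / (lam * s) := by rw [hgdef]
      _ ≤ (C * (s / y) ^ M) * (1 * Real.exp (-(lam * (s / 2)))) / (lam * y) := by
          refine div_le_div₀ (by positivity) ?_ (by positivity) ?_
          · refine mul_le_mul hnb ?_ (mul_nonneg hβT.1 (pow_nonneg hT0 _)) (by positivity)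
            exact mul_le_mul hβT.2 hTk (pow_nonneg hT0 _) zero_le_one
          · nlinarith [mul_lt_mul_of_pos_left hmem.1 hlam0]
      _ ≤ (C * ((M.factorial : ℝ) * Real.exp (lam / 4 * s) / (lam / 4 * y) ^ M))
            * (1 * Real.exp (-(lam * (s / 2)))) / (lam * y) := by
          refine div_le_div₀ (by positivity) ?_ (by positivity) le_rfl
          refine mul_le_mul_of_nonneg_right ?_ (by positivity)
          exact mul_le_mul_of_nonneg_left hpw hC.le
      _ = Kc * Real.exp (-(lam / 4) * s) := by
          have hexp : Real.exp (lam / 4 * s) * Real.exp (-(lam * (s / 2)))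
              = Real.exp (-(lam / 4) * s) := by
            rw [← Real.exp_add]; ring_nf
          calc C * ((M.factorial : ℝ) * Real.exp (lam / 4 * s) / (lam / 4 * y) ^ M)
              * (1 * Real.exp (-(lam * (s / 2)))) / (lam * y)
              = C * (M.factorial : ℝ) / (lam / 4 * y) ^ M / (lam * y)
                * (Real.exp (lam / 4 * s) * Real.exp (-(lam * (s / 2)))) := by ring
          _ = Kc * Real.exp (-(lam / 4) * s) := by rw [hexp, hKc]
    · have : F t s = 0 := by rw [hFdef]; exact indicator_of_notMem hmem (g t)
      rw [this]
      simp only [norm_zero]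
      positivity
  -- pointwise limit
  have hslope : Tendsto (fun h : ℝ => Real.log (1 + h) / h) (nhdsWithin 0 {(0:ℝ)}ᶜ) (nhds 1) := by
    have h1 : HasDerivAt Real.log 1 1 := by
      simpa using Real.hasDerivAt_log one_ne_zero
    have h2 := hasDerivAt_iff_tendsto_slope.1 h1
    have h3 : Tendsto (fun h : ℝ => (1 + h)) (nhdsWithin 0 {(0:ℝ)}ᶜ) (nhdsWithin 1 {(1:ℝ)}ᶜ) := by
      rw [tendsto_nhdsWithin_iff]
      constructor
      · have hco : Continuous (fun h : ℝ => 1 + h) := by continuity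
        have h5 := hco.tendsto (0:ℝ)
        simp only [add_zero] at h5
        exact h5.mono_left nhdsWithin_le_nhds
      · filter_upwards [self_mem_nhdsWithin] with h hh
        simp only [Set.mem_compl_iff, Set.mem_singleton_iff] at hh ⊢
        intro hcon
        exact hh (by linarith)
    have h4 := h2.comp h3
    refine h4.congr' ?_
    filter_upwards [self_mem_nhdsWithin] with h hh
    simp only [Set.mem_compl_iff, Set.mem_singleton_iff] at hh
    simp only [Function.comp_apply, slope_def_field, Real.log_one]
    rw [div_eq_div_iff (by simpa using hh) (by simpa using hh)]
    ring
  have hlogcomp : ∀ u : ℝ → ℝ, Tendsto u atTop (nhds 0) → (∀ᶠ t in atTop, u t ≠ 0) →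
      Tendsto (fun t => Real.log (1 + u t) / u t) atTop (nhds 1) := by
    intro u hu hne
    refine hslope.comp ?_
    rw [tendsto_nhdsWithin_iff]
    exact ⟨hu, by filter_upwards [hne] with t ht using ht⟩
  have hlim : ∀ᵐ s ∂(volume.restrict (Ioi y)), Tendsto (fun t => F t s) atTop (nhds (f s)) := by
    rw [ae_restrict_iff' measurableSet_Ioi]
    refine ae_of_all _ ?_
    intro s hs
    have hs0 : 0 < s := lt_trans hy hs
    have hev : ∀ᶠ t in atTop, F t s = g t s := by
      filter_upwards [hYtend.eventually_ge_atTop s] with t hts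
      rw [hFdef]
      exact indicator_of_mem (Set.mem_Ioc.mpr ⟨hs, hts⟩) (g t)
    set r : ℝ → ℝ := fun t => s * Real.exp (-(lam * t)) / y with hrdef
    have hr0 : ∀ t, 0 < r t := fun t => by positivity
    have hrt : Tendsto r atTop (nhds 0) := by
      have h1 : Tendsto (fun t : ℝ => Real.exp (-(lam * t))) atTop (nhds 0) := by
        refine Real.tendsto_exp_atBot.comp ?_
        exact tendsto_neg_atTop_atBot.comp (tendsto_id.const_mul_atTop hlam0)
      have h2 : Tendsto (fun t : ℝ => s * Real.exp (-(lam * t)) / y) atTop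
          (nhds (s * 0 / y)) := (h1.const_mul s).div_const y
      simpa using h2
    set T : ℝ → ℝ := fun t => (1 - r t) / (1 - β * r t) with hTdef
    have hnum1 : Tendsto (fun t => 1 - r t) atTop (nhds 1) := by
      simpa using (tendsto_const_nhds : Tendsto (fun _ : ℝ => (1:ℝ)) atTop _).sub hrt
    have hden1 : Tendsto (fun t => 1 - β * r t) atTop (nhds 1) := by
      simpa using (tendsto_const_nhds : Tendsto (fun _ : ℝ => (1:ℝ)) atTop _).sub
        (hrt.const_mul β)
    have hTt : Tendsto T atTop (nhds 1) := by
      have h1 := hnum1.div hden1 one_ne_zero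
      rw [div_one] at h1
      exact h1
    set k : ℝ → ℕ := fun t => ⌊y * Real.exp (lam * t)⌋₊ with hkdef
    have hYr : ∀ t, Y t * r t = s := by
      intro t
      have hee : Real.exp (lam * t) * Real.exp (-(lam * t)) = 1 := by
        rw [← Real.exp_add]; simp
      rw [hYdef, hrdef]
      simp only
      field_simp
      linear_combination hee
    have hkr : Tendsto (fun t => (k t : ℝ) * r t) atTop (nhds s) := by
      have hub : ∀ t : ℝ, (k t : ℝ) * r t ≤ s := by
        intro t
        have h1 : (k t : ℝ) ≤ Y t := by
          rw [hkdef, hYdef]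
          exact Nat.floor_le (by positivity)
        calc (k t : ℝ) * r t ≤ Y t * r t := by nlinarith [hr0 t]
        _ = s := hYr t
      have hlb : ∀ t : ℝ, s - r t ≤ (k t : ℝ) * r t := by
        intro t
        have h1 : Y t - 1 < (k t : ℝ) := by
          rw [hkdef, hYdef]
          exact Nat.sub_one_lt_floor _
        have h2 : (Y t - 1) * r t ≤ (k t : ℝ) * r t := by nlinarith [hr0 t]
        calc s - r t = (Y t - 1) * r t := by rw [sub_mul, one_mul, hYr t]
        _ ≤ (k t : ℝ) * r t := h2
      have hlbt : Tendsto (fun t => s - r t) atTop (nhds s) := by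
        simpa using (tendsto_const_nhds : Tendsto (fun _ : ℝ => s) atTop _).sub hrt
      exact tendsto_of_tendsto_of_tendsto_of_le_of_le hlbt tendsto_const_nhds hlb hub
    have hA : Tendsto (fun t => (k t : ℝ) * Real.log (1 - r t)) atTop (nhds (-s)) := by
      have h1 : Tendsto (fun t => Real.log (1 + (-(r t))) / (-(r t))) atTop (nhds 1) :=
        hlogcomp _ (by simpa using hrt.neg) (Eventually.of_forall fun t => by
          have := hr0 t; intro hcon; rw [neg_eq_zero] at hcon; linarith)
      have h2 : Tendsto (fun t => (k t : ℝ) * r t * (Real.log (1 + (-(r t))) / (-(r t))) * (-1))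
          atTop (nhds (s * 1 * (-1))) := (hkr.mul h1).mul tendsto_const_nhds
      have h3 : (fun t => (k t : ℝ) * r t * (Real.log (1 + (-(r t))) / (-(r t))) * (-1))
          = fun t => (k t : ℝ) * Real.log (1 - r t) := by
        funext t
        have hrne : r t ≠ 0 := (hr0 t).ne'
        rw [show (1 : ℝ) + -(r t) = 1 - r t by ring]
        field_simp
      rw [h3] at h2
      simpa using h2
    have hB : Tendsto (fun t => (k t : ℝ) * Real.log (1 - β * r t)) atTop (nhds (-(β * s))) := by
      rcases eq_or_lt_of_le hβ0 with hb0|hb0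
      · simp only [← hb0, zero_mul, mul_zero, sub_zero, Real.log_one, neg_zero]
        exact tendsto_const_nhds
      · have h1 : Tendsto (fun t => Real.log (1 + (-(β * r t))) / (-(β * r t))) atTop
            (nhds 1) :=
          hlogcomp _ (by
            have := (hrt.const_mul β)
            simpa using this.neg) (Eventually.of_forall fun t => by
              have := hr0 t
              intro hcon; rw [neg_eq_zero] at hcon; nlinarith)
        have h2 : Tendsto (fun t => (k t : ℝ) * r t * β
              * (Real.log (1 + (-(β * r t))) / (-(β * r t))) * (-1))
            atTop (nhds (s * β * 1 * (-1))) := ((hkr.mul tendsto_const_nhds).mul h1).mul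
              tendsto_const_nhds
        have h3 : (fun t => (k t : ℝ) * r t * β
              * (Real.log (1 + (-(β * r t))) / (-(β * r t))) * (-1))
            = fun t => (k t : ℝ) * Real.log (1 - β * r t) := by
          funext t
          have hrne : β * r t ≠ 0 := by
            have := hr0 t; positivity
          rw [show (1 : ℝ) + -(β * r t) = 1 - β * r t by ring]
          field_simp
          ring
          field_simp [(hr0 t).ne']
        rw [h3] at h2
        have : s * β * 1 * (-1) = -(β * s) := by ring
        rwa [this] at h2
    have hklog : Tendsto (fun t => (k t : ℝ) * Real.log (T t)) atTop (nhds (-(lam * s))) := by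
      have hsmall : ∀ᶠ t in atTop, r t < 1 / 2 := by
        have := hrt.eventually (eventually_lt_nhds (by norm_num : (0:ℝ) < 1/2))
        exact this
      have h1 := hA.sub hB
      have h2 : -s - -(β * s) = -(lam * s) := by rw [hlam]; ring
      rw [h2] at h1
      refine h1.congr' ?_
      filter_upwards [hsmall] with t ht
      have hr1 : 0 < 1 - r t := by linarith
      have hr2 : 0 < 1 - β * r t := by nlinarith [hr0 t]
      rw [hTdef]
      simp only
      rw [Real.log_div hr1.ne' hr2.ne']
      ring
    have hTk : Tendsto (fun t => T t ^ k t) atTop (nhds (Real.exp (-(lam * s)))) := by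
      have h1 := (Real.continuous_exp.tendsto _).comp hklog
      refine h1.congr' ?_
      have hsmall : ∀ᶠ t in atTop, r t < 1 / 2 :=
        hrt.eventually (eventually_lt_nhds (by norm_num : (0:ℝ) < 1/2))
      filter_upwards [hsmall] with t ht
      have hr1 : 0 < 1 - r t := by linarith
      have hr2 : 0 < 1 - β * r t := by nlinarith [hr0 t]
      have hTpos : 0 < T t := by
        rw [hTdef]; exact div_pos hr1 hr2
      simp only [Function.comp_apply]
      rw [Real.exp_nat_mul, Real.exp_log hTpos]
    have hcomb : Tendsto (fun t => n (lam⁻¹ * Real.log (s / y))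
        * ((1 - β * T t) * T t ^ k t) / (lam * s)) atTop
        (nhds (n (lam⁻¹ * Real.log (s / y)) * ((1 - β * 1) * Real.exp (-(lam * s)))
          / (lam * s))) := by
      have hbt : Tendsto (fun t => 1 - β * T t) atTop (nhds (1 - β * 1)) :=
        (tendsto_const_nhds : Tendsto (fun _ : ℝ => (1:ℝ)) atTop _).sub (hTt.const_mul β)
      exact ((hbt.mul hTk).const_mul _).div_const _
    have hval : n (lam⁻¹ * Real.log (s / y)) * ((1 - β * 1) * Real.exp (-(lam * s)))
        / (lam * s) = f s := by
      rw [hfdef]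
      simp only
      rw [mul_one, ← hlam, neg_mul]
      field_simp
    rw [hval] at hcomb
    refine Tendsto.congr' ?_ hcomb
    filter_upwards [hev] with t ht
    rw [ht, hgdef]
  -- bound integrability
  have hbint : Integrable (fun s : ℝ => Kc * Real.exp (-(lam / 4) * s))
      (volume.restrict (Ioi y)) :=
    (exp_neg_integrableOn_Ioi y (by positivity : (0:ℝ) < lam / 4)).const_mul Kc
  have hdct := MeasureTheory.tendsto_integral_filter_of_dominated_convergence
    (μ := volume.restrict (Ioi y)) (F := F) (f := f)
    (fun s => Kc * Real.exp (-(lam / 4) * s))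
    (Eventually.of_forall hgm) hbound hbint hlim
  -- identify the integrals
  have heq : ∀ᶠ t in atTop, (∫ s, F t s ∂(volume.restrict (Ioi y)))
      = ∫ τ in (0:ℝ)..t, n (t - τ) * (1 - β * (birthDeathS β τ)⁻¹) *
          ((birthDeathS β τ)⁻¹) ^ (⌊y * Real.exp (lam * t)⌋₊) := by
    filter_upwards [eventually_gt_atTop 0] with t ht
    have hyY : y ≤ Y t := by
      rw [hYdef]
      simp only
      nlinarith [Real.one_le_exp (by nlinarith : (0:ℝ) ≤ lam * t)]
    have h1 := cov β hβ0 hβ1 lam hlam n (n_contOn_Ici hn) y hy t ht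
      (⌊y * Real.exp (lam * t)⌋₊)
    have h2 : (∫ s in y..(y * Real.exp (lam * t)),
        n (lam⁻¹ * Real.log (s / y)) *
          ((1 - β * ((1 - s * Real.exp (-(lam * t)) / y) / (1 - β * (s * Real.exp (-(lam * t)) / y))))
            * ((1 - s * Real.exp (-(lam * t)) / y) / (1 - β * (s * Real.exp (-(lam * t)) / y)))
              ^ (⌊y * Real.exp (lam * t)⌋₊))
          / (lam * s)) = ∫ s in Ioc y (Y t), g t s := by
      rw [intervalIntegral.integral_of_le hyY]
    have h3 : (∫ s, F t s ∂(volume.restrict (Ioi y))) = ∫ s in Ioc y (Y t), g t s := by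
      rw [hFdef]
      simp only
      rw [MeasureTheory.integral_indicator measurableSet_Ioc,
        Measure.restrict_restrict measurableSet_Ioc,
        inter_eq_self_of_subset_left Ioc_subset_Ioi_self]
    rw [h3, ← h2, ← h1]
  refine Tendsto.congr' heq ?_
  convert hdct using 2

lemma m_pos (β : ℝ) (hβ0 : 0 ≤ β) (hβ1 : β < 1) (lam : ℝ) (hlam : lam = 1 - β)
    (n : ℝ → ℝ) (hn : Assumption1 n) (y : ℝ) (hy : 0 < y) :
    0 < ∫ s in Set.Ioi y, n (lam⁻¹ * Real.log (s / y)) * Real.exp (-lam * s) / s := by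
  have hlam0 : 0 < lam := by rw [hlam]; linarith
  obtain ⟨C, p, hC, hp, hCp⟩ := n_growth hn
  set M : ℕ := ⌈p / lam⌉₊ with hM
  set Kc : ℝ := C * M.factorial / (lam / 4 * y) ^ M / y with hKc
  set f : ℝ → ℝ := fun s => n (lam⁻¹ * Real.log (s / y)) * Real.exp (-lam * s) / s with hf
  have hnm : AEStronglyMeasurable (fun s : ℝ => n (lam⁻¹ * Real.log (s / y)))
      (volume.restrict (Ioi y)) := by
    have hlogc : ContinuousOn (fun s : ℝ => lam⁻¹ * Real.log (s / y)) (Ioi y) := by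
      refine continuousOn_const.mul (ContinuousOn.log (continuousOn_id.div_const y) ?_)
      intro s hs
      have hs0 : 0 < s := lt_trans hy hs
      positivity
    have hmaps : MapsTo (fun s : ℝ => lam⁻¹ * Real.log (s / y)) (Ioi y) (Ici 0) := by
      intro s hs
      have h1 : (1:ℝ) ≤ s / y := (one_le_div hy).2 (le_of_lt hs)
      have h2 : 0 ≤ Real.log (s / y) := Real.log_nonneg h1
      have : 0 ≤ lam⁻¹ * Real.log (s / y) := by positivity
      exact this
    exact ((n_contOn_Ici hn).comp hlogc hmaps).aestronglyMeasurable measurableSet_Ioi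
  have hfm : AEStronglyMeasurable f (volume.restrict (Ioi y)) := by
    have hrest : Measurable (fun s : ℝ => Real.exp (-lam * s)) :=
      Real.measurable_exp.comp (measurable_id.const_mul _)
    rw [hf]
    exact ((hnm.aemeasurable.mul hrest.aemeasurable).div
      measurable_id.aemeasurable).aestronglyMeasurable
  have hbint : Integrable (fun s : ℝ => Kc * Real.exp (-(lam / 4) * s))
      (volume.restrict (Ioi y)) :=
    (exp_neg_integrableOn_Ioi y (by positivity : (0:ℝ) < lam / 4)).const_mul Kc
  have hb : ∀ᵐ s ∂(volume.restrict (Ioi y)), ‖f s‖ ≤ Kc * Real.exp (-(lam / 4) * s) := by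
    rw [ae_restrict_iff' measurableSet_Ioi]
    refine ae_of_all _ ?_
    intro s hs
    have hs0 : 0 < s := lt_trans hy hs
    have hsy1 : (1:ℝ) ≤ s / y := (one_le_div hy).2 (le_of_lt hs)
    have hnb : n (lam⁻¹ * Real.log (s / y)) ≤ C * (s / y) ^ M := by
      have hu0 : 0 ≤ lam⁻¹ * Real.log (s / y) := by
        have := Real.log_nonneg hsy1; positivity
      refine le_trans (hCp _ hu0) ?_
      have h1 : p * (lam⁻¹ * Real.log (s / y)) ≤ (M : ℝ) * Real.log (s / y) := by
        have h2 : p / lam ≤ (M : ℝ) := Nat.le_ceil _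
        have h3 : 0 ≤ Real.log (s / y) := Real.log_nonneg hsy1
        calc p * (lam⁻¹ * Real.log (s / y)) = (p / lam) * Real.log (s / y) := by ring
        _ ≤ (M : ℝ) * Real.log (s / y) := mul_le_mul_of_nonneg_right h2 h3
      calc C * Real.exp (p * (lam⁻¹ * Real.log (s / y)))
          ≤ C * Real.exp ((M : ℝ) * Real.log (s / y)) :=
            mul_le_mul_of_nonneg_left (Real.exp_le_exp.2 h1) hC.le
      _ = C * (s / y) ^ M := by rw [Real.exp_nat_mul, Real.exp_log (by positivity)]
    have hpw : (s / y) ^ M ≤ (M.factorial : ℝ) * Real.exp (lam / 4 * s) / (lam / 4 * y) ^ M := by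
      have h1 : (lam / 4 * s) ^ M ≤ (M.factorial : ℝ) * Real.exp (lam / 4 * s) :=
        pow_le_factorial_mul_exp M (by positivity)
      have h2 : (s / y) ^ M = (lam / 4 * s) ^ M / (lam / 4 * y) ^ M := by
        rw [← div_pow]
        congr 1
        rw [mul_div_mul_left _ _ (by positivity : (lam / 4 : ℝ) ≠ 0)]
      rw [h2]
      gcongr
    have hfnn : 0 ≤ f s := by
      rw [hf]
      have := n_nonneg hn (lam⁻¹ * Real.log (s / y))
      positivity
    calc ‖f s‖ = f s := by rw [Real.norm_eq_abs, abs_of_nonneg hfnn]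
    _ = n (lam⁻¹ * Real.log (s / y)) * Real.exp (-lam * s) / s := by rw [hf]
    _ ≤ (C * (s / y) ^ M) * Real.exp (-lam * s) / y := by
        refine div_le_div₀ (by positivity) ?_ hy (le_of_lt hs)
        exact mul_le_mul_of_nonneg_right hnb (Real.exp_pos _).le
    _ ≤ (C * ((M.factorial : ℝ) * Real.exp (lam / 4 * s) / (lam / 4 * y) ^ M))
          * Real.exp (-lam * s) / y := by
        refine div_le_div₀ (by positivity) ?_ hy le_rfl
        exact mul_le_mul_of_nonneg_right (mul_le_mul_of_nonneg_left hpw hC.le) (Real.exp_pos _).le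
    _ = Kc * (Real.exp (lam / 4 * s) * Real.exp (-lam * s)) := by rw [hKc]; ring
    _ ≤ Kc * Real.exp (-(lam / 4) * s) := by
        have hKc0 : 0 ≤ Kc := by rw [hKc]; positivity
        refine mul_le_mul_of_nonneg_left ?_ hKc0
        rw [← Real.exp_add, Real.exp_le_exp]
        nlinarith
  have hint : IntegrableOn f (Ioi y) := Integrable.mono' hbint hfm hb
  have hnn : 0 ≤ᵐ[volume.restrict (Ioi y)] f := by
    filter_upwards [ae_restrict_mem measurableSet_Ioi] with s hs
    simp only [Pi.zero_apply]
    have hs0 : 0 < s := lt_trans hy hs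
    have := n_nonneg hn (lam⁻¹ * Real.log (s / y))
    rw [hf]
    positivity
  have hiff := setIntegral_pos_iff_support_of_nonneg_ae hnn hint
  rw [hf] at hiff
  rw [hiff]
  have hsub : Ioi y ⊆ Function.support f ∩ Ioi y := by
    intro s hs
    refine ⟨?_, hs⟩
    have hs0 : 0 < s := lt_trans hy hs
    have hu : 0 < lam⁻¹ * Real.log (s / y) := by
      have h1 : (1:ℝ) < s / y := (one_lt_div hy).2 hs
      have h2 : 0 < Real.log (s / y) := Real.log_pos h1
      positivity
    have : 0 < f s := by
      rw [hf]
      have := n_pos hn _ hu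
      positivity
    exact Function.mem_support.2 (ne_of_gt this)
  calc (0:ENNReal) < volume (Ioi y) := by simp [Real.volume_Ioi]
  _ ≤ volume (Function.support f ∩ Ioi y) := measure_mono hsub


/-- Poisson process characterisation of the tail: the rescaled clone size `Y_t e^{−λt}`,
conditioned to exceed `ε`, converges in distribution to the law with tail `m(x)/m(ε)`,
the normalised mean measure of the limiting Poisson point process of clone sizes. Here
`N_t(y) = ∫_0^t n(t−τ)(1−β S_τ⁻¹) S_τ^{−⌊y e^{λt}⌋} dτ` so
`P(Y_t > ⌊y e^{λt}⌋) = N_t(y)/a_t`, and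
`m(y) = ∫_y^∞ n(λ⁻¹ log(s/y)) e^{−λs} s⁻¹ ds`. -/
theorem rescaled_clone_size_conditional_limit
    (β : ℝ) (hβ : β ∈ Set.Ico (0 : ℝ) 1) (lam : ℝ) (hlam : lam = 1 - β)
    (n : ℝ → ℝ) (hn : Assumption1 n)
    (ε x : ℝ) (hε : 0 < ε) (hεx : ε ≤ x)
    (N : ℝ → ℝ → ℝ) (m : ℝ → ℝ)
    (hN : ∀ t y : ℝ, N t y =
      ∫ τ in (0:ℝ)..t,
        n (t - τ) * (1 - β * (birthDeathS β τ)⁻¹) *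
          ((birthDeathS β τ)⁻¹) ^ (⌊y * Real.exp (lam * t)⌋₊))
    (hm : ∀ y : ℝ, m y =
      ∫ s in Set.Ioi y, n (lam⁻¹ * Real.log (s / y)) * Real.exp (-lam * s) / s) :
    Filter.Tendsto (fun t : ℝ => N t x / N t ε) Filter.atTop (nhds (m x / m ε)) := by
  obtain ⟨hβ0, hβ1⟩ := hβ
  have hx : 0 < x := lt_of_lt_of_le hε hεx
  have h1 := tendsto_N β hβ0 hβ1 lam hlam n hn x hx
  have h2 := tendsto_N β hβ0 hβ1 lam hlam n hn ε hε
  have h3 := m_pos β hβ0 hβ1 lam hlam n hn ε hε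
  simp only [hN, hm]
  exact h1.div h2 (ne_of_gt h3)
end

section
/- Let β ∈ [0,1), λ = 1−β, and let m ≥ 1 be an integer. Define μ_m(t) = (1−β S_t^{−1})(S_t−1)·Σ_{j=1}^∞ j^m S_t^{−j}, the m-th moment of the birth–death process started from one individual. Then μ_m(t) − m!·λ^{1−m}·e^{mλt} = O(e^{(m−1)λt}) as t → ∞. -/
open Filter Real Asymptotics

/-- The `m`-th moment of the birth–death process started from one individual:
`E(Z_u^m) = (1 − β S_u⁻¹)(S_u − 1) Σ_{j≥1} j^m S_u^{−j}`. -/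
noncomputable def birthDeathMoment (β : ℝ) (m : ℕ) (u : ℝ) : ℝ :=
  (1 - β * (birthDeathS β u)⁻¹) * (birthDeathS β u - 1) *
    ∑' j : ℕ, (j : ℝ) ^ m * ((birthDeathS β u)⁻¹) ^ j


/-- Stirling numbers of the second kind, defined by recursion. -/
def bdStir : ℕ → ℕ → ℕ
  | 0, 0 => 1
  | 0, _ + 1 => 0
  | _ + 1, 0 => 0
  | m + 1, k + 1 => (k + 1) * bdStir m (k + 1) + bdStir m k

lemma bdStir_eq_zero_of_lt : ∀ {m k : ℕ}, m < k → bdStir m k = 0 := by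
  intro m
  induction m with
  | zero =>
    intro k hk
    cases k with
    | zero => omega
    | succ k => rfl
  | succ m ih =>
    intro k hk
    cases k with
    | zero => omega
    | succ k =>
      have h1 : bdStir m (k + 1) = 0 := ih (by omega)
      have h2 : bdStir m k = 0 := ih (by omega)
      simp [bdStir, h1, h2]

lemma bdStir_self (m : ℕ) : bdStir m m = 1 := by
  induction m with
  | zero => rfl
  | succ m ih => simp [bdStir, ih, bdStir_eq_zero_of_lt (Nat.lt_succ_self m)]

lemma pow_eq_sum_bdStir (m j : ℕ) :
    (j : ℝ) ^ m = ∑ k ∈ Finset.range (m + 1),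
      (bdStir m k : ℝ) * (Nat.factorial k : ℝ) * (j.choose k : ℝ) := by
  induction m with
  | zero => simp [bdStir]
  | succ m ih =>
    have key : ∀ k : ℕ, (j : ℝ) * (j.choose k : ℝ) =
        (k + 1 : ℝ) * (j.choose (k+1) : ℝ) + (k : ℝ) * (j.choose k : ℝ) := by
      intro k
      rcases le_or_gt k j with hkj | hkj
      · have h' : (j.choose (k+1) : ℝ) * ((k : ℝ) + 1) =
            (j.choose k : ℝ) * ((j : ℝ) - (k : ℝ)) := by
          have := congrArg (Nat.cast : ℕ → ℝ) (Nat.choose_succ_right_eq j k)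
          push_cast [Nat.cast_sub hkj] at this
          linarith [this]
        linarith [h']
      · have h1 : j.choose (k+1) = 0 := Nat.choose_eq_zero_of_lt (by omega)
        have h2 : j.choose k = 0 := Nat.choose_eq_zero_of_lt hkj
        simp [h1, h2]
    have second : ∑ k ∈ Finset.range (m+1),
          (k : ℝ) * (bdStir m k : ℝ) * (Nat.factorial k : ℝ) * (j.choose k : ℝ)
        = ∑ k ∈ Finset.range (m+1),
          ((k : ℝ) + 1) * (bdStir m (k+1) : ℝ) * (Nat.factorial (k+1) : ℝ) * (j.choose (k+1) : ℝ) := by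
      rw [Finset.sum_range_succ'
        (fun k => (k : ℝ) * (bdStir m k : ℝ) * (Nat.factorial k : ℝ) * (j.choose k : ℝ)) m]
      rw [Finset.sum_range_succ
        (fun k => ((k : ℝ) + 1) * (bdStir m (k+1) : ℝ) * (Nat.factorial (k+1) : ℝ) * (j.choose (k+1) : ℝ)) m]
      push_cast [bdStir_eq_zero_of_lt (Nat.lt_succ_self m)]
      ring
    calc (j:ℝ) ^ (m+1) = (j:ℝ) * (j:ℝ)^m := by ring
    _ = ∑ k ∈ Finset.range (m+1), (j : ℝ) * ((bdStir m k : ℝ) * (Nat.factorial k : ℝ) * (j.choose k : ℝ)) := by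
        rw [ih, Finset.mul_sum]
    _ = ∑ k ∈ Finset.range (m+1), ((bdStir m k : ℝ) * (Nat.factorial (k+1) : ℝ) * (j.choose (k+1) : ℝ)
        + (k : ℝ) * (bdStir m k : ℝ) * (Nat.factorial k : ℝ) * (j.choose k : ℝ)) := by
        refine Finset.sum_congr rfl fun k _ => ?_
        push_cast [Nat.factorial_succ]
        linear_combination ((bdStir m k : ℝ) * (Nat.factorial k : ℝ)) * key k
    _ = ∑ k ∈ Finset.range (m + 2), (bdStir (m+1) k : ℝ) * (Nat.factorial k : ℝ) * (j.choose k : ℝ) := by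
        rw [Finset.sum_add_distrib, second, ← Finset.sum_add_distrib]
        rw [Finset.sum_range_succ'
          (fun k => (bdStir (m+1) k : ℝ) * (Nat.factorial k : ℝ) * (j.choose k : ℝ)) (m+1)]
        have h0 : bdStir (m+1) 0 = 0 := rfl
        rw [h0]
        simp only [Nat.cast_zero, zero_mul, add_zero]
        refine Finset.sum_congr rfl fun k _ => ?_
        have hrec : bdStir (m+1) (k+1) = (k+1) * bdStir m (k+1) + bdStir m k := rfl
        rw [hrec]
        push_cast
        ring

lemma bd_summable_choose {q : ℝ} (hq : |q| < 1) (k : ℕ) :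
    Summable (fun j : ℕ => (j.choose k : ℝ) * q ^ j) := by
  rw [← summable_nat_add_iff k]
  have : (fun n : ℕ => ((n + k).choose k : ℝ) * q ^ (n + k))
      = fun n : ℕ => q ^ k * (((n + k).choose k : ℝ) * q ^ n) := by
    funext n; rw [pow_add]; ring
  rw [this]
  exact (summable_choose_mul_geometric_of_norm_lt_one (R := ℝ) k
    (by rwa [Real.norm_eq_abs])).mul_left _

lemma bd_tsum_choose {q : ℝ} (hq : |q| < 1) (k : ℕ) :
    ∑' j : ℕ, (j.choose k : ℝ) * q ^ j = q ^ k / (1 - q) ^ (k + 1) := by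
  have hs := bd_summable_choose hq k
  have h1 := (Summable.sum_add_tsum_nat_add (f := fun j : ℕ => (j.choose k : ℝ) * q ^ j) k hs).symm
  have h2 : ∑ i ∈ Finset.range k, (i.choose k : ℝ) * q ^ i = 0 := by
    refine Finset.sum_eq_zero fun i hi => ?_
    rw [Nat.choose_eq_zero_of_lt (Finset.mem_range.1 hi)]
    simp
  have h3 : (fun n : ℕ => (((n + k).choose k : ℝ)) * q ^ (n + k))
      = fun n : ℕ => q ^ k * (((n + k).choose k : ℝ) * q ^ n) := by
    funext n; rw [pow_add]; ring
  rw [h1, h2, zero_add, h3, tsum_mul_left,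
    tsum_choose_mul_geometric_of_norm_lt_one k (by rwa [Real.norm_eq_abs])]
  ring

lemma bd_tsum_pow {q : ℝ} (hq : |q| < 1) (m : ℕ) :
    ∑' j : ℕ, (j : ℝ) ^ m * q ^ j
      = ∑ k ∈ Finset.range (m + 1),
          (bdStir m k : ℝ) * (Nat.factorial k : ℝ) * (q ^ k / (1 - q) ^ (k + 1)) := by
  have h1 : ∀ j : ℕ, (j : ℝ) ^ m * q ^ j
      = ∑ k ∈ Finset.range (m + 1),
          (bdStir m k : ℝ) * (Nat.factorial k : ℝ) * ((j.choose k : ℝ) * q ^ j) := by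
    intro j
    rw [pow_eq_sum_bdStir, Finset.sum_mul]
    exact Finset.sum_congr rfl fun k _ => by ring
  calc ∑' j : ℕ, (j : ℝ) ^ m * q ^ j
      = ∑' j : ℕ, ∑ k ∈ Finset.range (m + 1),
          (bdStir m k : ℝ) * (Nat.factorial k : ℝ) * ((j.choose k : ℝ) * q ^ j) := by
        exact tsum_congr h1
    _ = ∑ k ∈ Finset.range (m + 1), ∑' j : ℕ,
          (bdStir m k : ℝ) * (Nat.factorial k : ℝ) * ((j.choose k : ℝ) * q ^ j) := by
        exact Summable.tsum_finsetSum fun k _ => (bd_summable_choose hq k).mul_left _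
    _ = ∑ k ∈ Finset.range (m + 1),
          (bdStir m k : ℝ) * (Nat.factorial k : ℝ) * (q ^ k / (1 - q) ^ (k + 1)) := by
        exact Finset.sum_congr rfl fun k _ => by rw [tsum_mul_left, bd_tsum_choose hq k]

lemma bd_moment_formula (β : ℝ) (m : ℕ) (t : ℝ) (hβ0 : 0 ≤ β) (hβ1 : β < 1) (ht : 0 < t) :
    birthDeathMoment β m t = ∑ k ∈ Finset.range (m + 1),
      (bdStir m k : ℝ) * (Nat.factorial k : ℝ) *
        ((1 - β) / (1 - Real.exp (-(1 - β) * t)) *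
          ((1 - Real.exp (-(1 - β) * t)) / ((1 - β) * Real.exp (-(1 - β) * t))) ^ k) := by
  set x := Real.exp (-(1 - β) * t) with hxdef
  have hx0 : 0 < x := Real.exp_pos _
  have hx1 : x < 1 := by
    rw [hxdef]
    apply Real.exp_lt_one_iff.mpr
    nlinarith
  have hx1' : (0:ℝ) < 1 - x := by linarith
  have hbx : (0:ℝ) < 1 - β * x := by nlinarith
  have hS : birthDeathS β t = (1 - β * x) / (1 - x) := rfl
  have hq : (birthDeathS β t)⁻¹ = (1 - x) / (1 - β * x) := by
    rw [hS, inv_div]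
  have hqabs : |(1 - x) / (1 - β * x)| < 1 := by
    rw [abs_div, abs_of_pos hx1', abs_of_pos hbx, div_lt_one hbx]
    nlinarith
  have hβ : (0:ℝ) < 1 - β := by linarith
  rw [birthDeathMoment, hq, bd_tsum_pow hqabs, hS, Finset.mul_sum]
  refine Finset.sum_congr rfl fun k _ => ?_
  have h1q : 1 - (1 - x) / (1 - β * x) = (1 - β) * x / (1 - β * x) := by
    rw [eq_div_iff (ne_of_gt hbx), sub_mul, div_mul_cancel₀ _ (ne_of_gt hbx)]
    ring
  rw [h1q]
  have h1 : (1 - x) ≠ 0 := ne_of_gt hx1'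
  have h2 : (1 - β * x) ≠ 0 := ne_of_gt hbx
  have h3 : (1 - β) ≠ 0 := ne_of_gt hβ
  have h4 : x ≠ 0 := ne_of_gt hx0
  rw [div_pow, div_pow, div_pow, pow_succ]
  field_simp
  ring

/-- Asymptotics of the moments of the birth–death process:
`μ_m(t) − m! λ^{1−m} e^{mλt} = O(e^{(m−1)λt})` as `t → ∞`, where `λ = 1−β`. -/
theorem birth_death_moment_asymptotics
    (β : ℝ) (hβ : β ∈ Set.Ico (0 : ℝ) 1) (lam : ℝ) (hlam : lam = 1 - β)
    (m : ℕ) (hm : 1 ≤ m) :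
    (fun t : ℝ =>
        birthDeathMoment β m t -
          (Nat.factorial m : ℝ) * lam ^ ((1 : ℤ) - (m : ℤ)) * Real.exp ((m : ℝ) * lam * t))
      =O[Filter.atTop] (fun t : ℝ => Real.exp (((m : ℝ) - 1) * lam * t)) := by
  obtain ⟨hβ0, hβ1⟩ := hβ
  subst hlam
  set lam := 1 - β with hlamdef
  have hl : 0 < lam := by rw [hlamdef]; linarith
  set X : ℝ → ℝ := fun t => Real.exp (-lam * t) with hXdef
  have hX0 : ∀ t, 0 < X t := fun t => Real.exp_pos _
  have hX1 : ∀ t, 0 < t → X t < 1 := by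
    intro t ht
    apply Real.exp_lt_one_iff.mpr
    nlinarith
  have hXle1 : ∀ t, 0 ≤ t → X t ≤ 1 := by
    intro t ht
    calc X t ≤ Real.exp 0 := Real.exp_le_exp.mpr (by nlinarith)
    _ = 1 := Real.exp_zero
  set T : ℕ → ℝ → ℝ := fun k t => (bdStir m k : ℝ) * (Nat.factorial k : ℝ) *
      (lam / (1 - X t) * ((1 - X t) / (lam * X t)) ^ k) with hTdef
  have hmoment : ∀ t : ℝ, 0 < t →
      birthDeathMoment β m t = (∑ k ∈ Finset.range m, T k t) + T m t := by
    intro t ht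
    rw [bd_moment_formula β m t hβ0 hβ1 ht, Finset.sum_range_succ]
  -- eventually x t ≤ 1/2 for bounds
  have hxhalf : ∀ t : ℝ, Real.log 2 / lam ≤ t → X t ≤ 1 / 2 := by
    intro t ht
    have h2 : Real.log 2 ≤ lam * t := by
      rw [div_le_iff₀ hl] at ht; linarith [ht]
    calc X t = Real.exp (-(lam * t)) := by rw [hXdef]; ring_nf
    _ ≤ Real.exp (-(Real.log 2)) := Real.exp_le_exp.mpr (by linarith)
    _ = 1 / 2 := by rw [Real.exp_neg, Real.exp_log (by norm_num)]; norm_num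
  have ht0pos : 0 < Real.log 2 / lam := div_pos (Real.log_pos (by norm_num)) hl
  -- inverse exponential facts
  have hXinv : ∀ t, (X t)⁻¹ = Real.exp (lam * t) := by
    intro t
    rw [hXdef, ← Real.exp_neg]
    ring_nf
  have hXpowinv : ∀ (k : ℕ) (t : ℝ), ((X t)⁻¹) ^ k = Real.exp ((k : ℝ) * lam * t) := by
    intro k t
    rw [hXinv, ← Real.exp_nat_mul, mul_assoc]
  -- bound each lower-order term
  have hTk : ∀ k, k < m → T k =O[Filter.atTop]
      (fun t : ℝ => Real.exp (((m : ℝ) - 1) * lam * t)) := by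
    intro k hk
    rw [Asymptotics.isBigO_iff]
    refine ⟨(bdStir m k : ℝ) * (Nat.factorial k : ℝ) * (2 * lam * (lam⁻¹) ^ k), ?_⟩
    filter_upwards [Filter.eventually_ge_atTop (Real.log 2 / lam)] with t ht
    have ht0 : 0 ≤ t := le_trans ht0pos.le ht
    have hxh := hxhalf t ht
    have hx0 := hX0 t
    have h1x : (1:ℝ)/2 ≤ 1 - X t := by linarith
    have h1x0 : (0:ℝ) < 1 - X t := by linarith
    have hTnn : 0 ≤ T k t := by
      rw [hTdef]
      positivity
    rw [Real.norm_eq_abs, Real.norm_eq_abs, abs_of_nonneg hTnn,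
      abs_of_nonneg (Real.exp_pos _).le]
    have e1 : lam / (1 - X t) ≤ 2 * lam := by
      rw [div_le_iff₀ h1x0]
      nlinarith
    have e2 : ((1 - X t) / (lam * X t)) ^ k ≤ (lam⁻¹) ^ k * Real.exp (((m : ℝ) - 1) * lam * t) := by
      have s1 : (1 - X t) / (lam * X t) ≤ lam⁻¹ * (X t)⁻¹ := by
        rw [div_le_iff₀ (by positivity)]
        have : lam⁻¹ * (X t)⁻¹ * (lam * X t) = 1 := by field_simp
        rw [this]
        linarith [(hX1 t (lt_of_lt_of_le ht0pos ht))]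
      calc ((1 - X t) / (lam * X t)) ^ k ≤ (lam⁻¹ * (X t)⁻¹) ^ k :=
            pow_le_pow_left₀ (by positivity) s1 k
      _ = (lam⁻¹) ^ k * ((X t)⁻¹) ^ k := mul_pow _ _ _
      _ = (lam⁻¹) ^ k * Real.exp ((k : ℝ) * lam * t) := by rw [hXpowinv]
      _ ≤ (lam⁻¹) ^ k * Real.exp (((m : ℝ) - 1) * lam * t) := by
            have hkm : (k : ℝ) ≤ (m : ℝ) - 1 := by
              have : (k : ℝ) + 1 ≤ (m : ℝ) := by exact_mod_cast hk
              linarith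
            have : Real.exp ((k : ℝ) * lam * t) ≤ Real.exp (((m : ℝ) - 1) * lam * t) :=
              Real.exp_le_exp.mpr
                (by nlinarith [mul_nonneg (sub_nonneg.mpr hkm) (mul_nonneg hl.le ht0)])
            have hp : (0:ℝ) ≤ (lam⁻¹) ^ k := by positivity
            nlinarith
    have step1 : T k t ≤ (bdStir m k : ℝ) * (Nat.factorial k : ℝ) *
        ((2 * lam) * ((lam⁻¹) ^ k * Real.exp (((m : ℝ) - 1) * lam * t))) := by
      rw [hTdef]
      have hc : (0:ℝ) ≤ (bdStir m k : ℝ) * (Nat.factorial k : ℝ) := by positivity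
      have hB : (0:ℝ) ≤ ((1 - X t) / (lam * X t)) ^ k := by positivity
      have inner1 : lam / (1 - X t) * ((1 - X t) / (lam * X t)) ^ k ≤
          (2 * lam) * ((1 - X t) / (lam * X t)) ^ k := mul_le_mul_of_nonneg_right e1 hB
      have inner2 : (2 * lam) * ((1 - X t) / (lam * X t)) ^ k ≤
          (2 * lam) * ((lam⁻¹) ^ k * Real.exp (((m : ℝ) - 1) * lam * t)) :=
        mul_le_mul_of_nonneg_left e2 (by positivity)
      exact mul_le_mul_of_nonneg_left (le_trans inner1 inner2) hc
    calc T k t ≤ (bdStir m k : ℝ) * (Nat.factorial k : ℝ) *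
          ((2 * lam) * ((lam⁻¹) ^ k * Real.exp (((m : ℝ) - 1) * lam * t))) := step1
      _ = (bdStir m k : ℝ) * (Nat.factorial k : ℝ) * (2 * lam * (lam⁻¹) ^ k) *
          Real.exp (((m : ℝ) - 1) * lam * t) := by ring
  -- the top term minus the main term
  set M : ℝ → ℝ := fun t => (Nat.factorial m : ℝ) * lam ^ ((1 : ℤ) - (m : ℤ)) *
      Real.exp ((m : ℝ) * lam * t) with hMdef
  have hzpow : lam ^ ((1 : ℤ) - (m : ℤ)) = lam / lam ^ m := by
    rw [zpow_sub₀ (ne_of_gt hl), zpow_one, zpow_natCast]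
  obtain ⟨n, rfl⟩ : ∃ n, m = n + 1 := ⟨m - 1, by omega⟩
  have hRformula : ∀ t : ℝ, 0 < t → T (n+1) t - M t =
      (Nat.factorial (n+1) : ℝ) * (lam / lam ^ (n+1)) * Real.exp (((n+1 : ℕ) : ℝ) * lam * t) *
        ((1 - X t) ^ n - 1) := by
    intro t ht
    have hE : Real.exp (((n+1 : ℕ) : ℝ) * lam * t) = ((X t)⁻¹) ^ (n+1) := (hXpowinv (n+1) t).symm
    rw [hTdef, hMdef, hzpow]
    simp only [bdStir_self, Nat.cast_one, one_mul]
    rw [hE]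
    have h1 : (1 : ℝ) - X t ≠ 0 := ne_of_gt (by linarith [hX1 t ht])
    have h2 : X t ≠ 0 := ne_of_gt (hX0 t)
    have h3 : lam ≠ 0 := ne_of_gt hl
    rw [div_pow, mul_pow, inv_pow]
    have h4 : X t ^ (n+1) ≠ 0 := pow_ne_zero _ h2
    have h5 : lam ^ (n+1) ≠ 0 := pow_ne_zero _ h3
    field_simp
    ring
  have hR : (fun t => T (n+1) t - M t) =O[Filter.atTop]
      (fun t : ℝ => Real.exp ((((n+1 : ℕ) : ℝ) - 1) * lam * t)) := by
    rw [Asymptotics.isBigO_iff]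
    refine ⟨(Nat.factorial (n+1) : ℝ) * (lam / lam ^ (n+1)) * n, ?_⟩
    filter_upwards [Filter.eventually_gt_atTop 0] with t ht
    rw [hRformula t ht]
    have hx0 := hX0 t
    have hx1 := hX1 t ht
    have hbern : 1 - (n : ℝ) * X t ≤ (1 - X t) ^ n := by
      have := one_add_mul_le_pow (a := -(X t)) (by linarith) n
      calc 1 - (n : ℝ) * X t = 1 + (n : ℝ) * (-(X t)) := by ring
      _ ≤ (1 + -(X t)) ^ n := this
      _ = (1 - X t) ^ n := by ring_nf
    have hle1 : (1 - X t) ^ n ≤ 1 := pow_le_one₀ (by linarith) (by linarith)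
    have habs : |(1 - X t) ^ n - 1| ≤ (n : ℝ) * X t := by
      rw [abs_sub_comm, abs_of_nonneg (by linarith)]
      linarith
    rw [Real.norm_eq_abs, Real.norm_eq_abs, abs_of_nonneg (Real.exp_pos _).le]
    have hfac : (0:ℝ) ≤ (Nat.factorial (n+1) : ℝ) * (lam / lam ^ (n+1)) := by positivity
    have hEXP : Real.exp (((n+1 : ℕ) : ℝ) * lam * t) * X t =
        Real.exp ((((n+1 : ℕ) : ℝ) - 1) * lam * t) := by
      rw [hXdef, ← Real.exp_add]
      ring_nf
    calc |(Nat.factorial (n+1) : ℝ) * (lam / lam ^ (n+1)) *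
          Real.exp (((n+1 : ℕ) : ℝ) * lam * t) * ((1 - X t) ^ n - 1)|
        = (Nat.factorial (n+1) : ℝ) * (lam / lam ^ (n+1)) *
          Real.exp (((n+1 : ℕ) : ℝ) * lam * t) * |(1 - X t) ^ n - 1| := by
          rw [abs_mul, abs_of_nonneg (by positivity)]
      _ ≤ (Nat.factorial (n+1) : ℝ) * (lam / lam ^ (n+1)) *
          Real.exp (((n+1 : ℕ) : ℝ) * lam * t) * ((n : ℝ) * X t) := by
          have : (0:ℝ) ≤ (Nat.factorial (n+1) : ℝ) * (lam / lam ^ (n+1)) *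
              Real.exp (((n+1 : ℕ) : ℝ) * lam * t) := by positivity
          exact mul_le_mul_of_nonneg_left habs this
      _ = (Nat.factorial (n+1) : ℝ) * (lam / lam ^ (n+1)) * (n : ℝ) *
          (Real.exp (((n+1 : ℕ) : ℝ) * lam * t) * X t) := by ring
      _ = (Nat.factorial (n+1) : ℝ) * (lam / lam ^ (n+1)) * (n : ℝ) *
          Real.exp ((((n+1 : ℕ) : ℝ) - 1) * lam * t) := by rw [hEXP]
  -- assemble
  have hEv : (fun t : ℝ => birthDeathMoment β (n+1) t - M t) =ᶠ[Filter.atTop]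
      (fun t : ℝ => (∑ k ∈ Finset.range (n+1), T k t) + (T (n+1) t - M t)) := by
    filter_upwards [Filter.eventually_gt_atTop 0] with t ht
    rw [hmoment t ht]
    ring
  refine hEv.trans_isBigO ?_
  exact (Asymptotics.IsBigO.fun_sum fun k hk => hTk k (Finset.mem_range.1 hk)).add hR
end
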